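/- Let b ≥ 1 and N ≥ 1 be integers, and let A = (a_{ij})_{i,j≥1} be an infinite 0–1 matrix satisfying: a_{i,i+1} = 1 for all i; a_{ij} = 0 whenever j ≠ i+1 and j > i − N; and each row has at most b nonzero entries. Define a_1^{(n)} = Σ_j (A^n)_{1j} (the number of paths of length n starting at vertex 1 in the associated directed graph). Then limsup_{n→∞} (1/n) log a_1^{(n)} ≤ (2/N) log b + (2/N) log N. -/

import Mathlib

open Filter

/-- The number of directed paths of length `n` starting at vertex `0` in the countable
graph with adjacency matrix `a` (this equals `Σ_j (A^n)_{0j}`). -/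
noncomputable def pathCount (a : ℕ → ℕ → ℕ) (n : ℕ) : ℕ :=
  Nat.card {p : Fin (n + 1) → ℕ //
    p 0 = 0 ∧ ∀ i : Fin n, a (p i.castSucc) (p i.succ) = 1}

namespace PathCountAux

abbrev PathSp (a : ℕ → ℕ → ℕ) (n : ℕ) :=
  {p : Fin (n + 1) → ℕ //
    p 0 = 0 ∧ ∀ i : Fin n, a (p i.castSucc) (p i.succ) = 1}

def idxIn (s : Finset ℕ) {b : ℕ} (hb : 1 ≤ b) (w : ℕ) : Fin b :=
  ⟨(s.sort (· ≤ ·)).idxOf w % b, Nat.mod_lt _ hb⟩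

def recov (s : Finset ℕ) {b : ℕ} (j : Fin b) : ℕ := (s.sort (· ≤ ·)).getD j 0

lemma recov_idxIn (s : Finset ℕ) {b : ℕ} (hb : 1 ≤ b) (hcard : s.card ≤ b) {w : ℕ}
    (hw : w ∈ s) : recov s (idxIn s hb w) = w := by
  have hmem : w ∈ s.sort (· ≤ ·) := (Finset.mem_sort _).2 hw
  have hlt : (s.sort (· ≤ ·)).idxOf w < (s.sort (· ≤ ·)).length :=
    List.idxOf_lt_length_iff.2 hmem
  have hlen : (s.sort (· ≤ ·)).length = s.card := Finset.length_sort _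
  have hltb : (s.sort (· ≤ ·)).idxOf w < b := by omega
  simp only [recov, idxIn, Nat.mod_eq_of_lt hltb]
  rw [List.getD_eq_getElem _ _ (by omega)]
  exact List.getElem_idxOf hlt

def downSet {n : ℕ} (p : Fin (n + 1) → ℕ) : Finset (Fin n) :=
  Finset.univ.filter (fun i => p i.succ ≠ p i.castSucc + 1)

lemma mem_downSet {n : ℕ} {p : Fin (n + 1) → ℕ} {i : Fin n} :
    i ∈ downSet p ↔ p i.succ ≠ p i.castSucc + 1 := by
  simp [downSet]

lemma telescope : ∀ {n : ℕ} (p : Fin (n + 1) → ℕ),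
    ∑ i : Fin n, ((p i.succ : ℤ) - (p i.castSucc : ℤ))
      = (p (Fin.last n) : ℤ) - (p 0 : ℤ) := by
  intro n
  induction n with
  | zero => intro p; simp
  | succ n ih =>
    intro p
    rw [Fin.sum_univ_castSucc]
    have h := ih (fun i => p i.castSucc)
    simp only [← Fin.succ_castSucc] at h
    rw [h, Fin.succ_last]
    have h0 : (Fin.castSucc (0 : Fin (n+1))) = (0 : Fin (n+2)) := by
      apply Fin.ext; simp
    rw [h0]
    ring

lemma downSet_card_mul_le {N n : ℕ} (a : ℕ → ℕ → ℕ) (hN : 1 ≤ N)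
    (hzero : ∀ i j : ℕ, j ≠ i + 1 → (i : ℤ) - N < (j : ℤ) → a i j = 0)
    (p : PathSp a n) : (downSet p.1).card * N ≤ n := by
  classical
  obtain ⟨p, hp0, hpath⟩ := p
  have key : ∀ i ∈ downSet p, ((p i.succ : ℤ) - (p i.castSucc : ℤ)) ≤ -(N : ℤ) := by
    intro i hi
    have hne : p i.succ ≠ p i.castSucc + 1 := mem_downSet.1 hi
    have h1 : a (p i.castSucc) (p i.succ) = 1 := hpath i
    by_contra hlt
    push_neg at hlt
    have h2 : ((p i.castSucc : ℕ) : ℤ) - N < ((p i.succ : ℕ) : ℤ) := by linarith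
    have := hzero (p i.castSucc) (p i.succ) hne h2
    omega
  have tel := telescope p
  have split := Finset.sum_filter_add_sum_filter_not Finset.univ
    (fun i : Fin n => p i.succ ≠ p i.castSucc + 1)
    (fun i : Fin n => ((p i.succ : ℤ) - (p i.castSucc : ℤ)))
  have hdown : ∑ i ∈ downSet p, ((p i.succ : ℤ) - (p i.castSucc : ℤ))
      ≤ ((downSet p).card : ℤ) * (-(N : ℤ)) := by
    have := Finset.sum_le_card_nsmul (downSet p)
      (fun i : Fin n => ((p i.succ : ℤ) - (p i.castSucc : ℤ))) (-(N : ℤ)) key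
    simpa [nsmul_eq_mul] using this
  have hkn : (downSet p).card ≤ n := by
    calc (downSet p).card ≤ (Finset.univ : Finset (Fin n)).card :=
          Finset.card_le_card (Finset.subset_univ _)
    _ = n := by simp
  have hupcard : (Finset.univ.filter
      (fun i : Fin n => ¬ p i.succ ≠ p i.castSucc + 1)).card = n - (downSet p).card := by
    have h := Finset.card_filter_add_card_filter_not
      (s := (Finset.univ : Finset (Fin n)))
      (p := fun i : Fin n => p i.succ ≠ p i.castSucc + 1)
    simp only [Finset.card_univ, Fintype.card_fin] at h
    have hSk : (Finset.filter (fun i : Fin n => p i.succ ≠ p i.castSucc + 1)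
        Finset.univ).card = (downSet p).card := rfl
    omega
  have hup : ∑ i ∈ Finset.univ.filter (fun i : Fin n => ¬ p i.succ ≠ p i.castSucc + 1),
      ((p i.succ : ℤ) - (p i.castSucc : ℤ)) = ((n : ℤ) - ((downSet p).card : ℤ)) := by
    have h1 : ∀ i ∈ Finset.univ.filter (fun i : Fin n => ¬ p i.succ ≠ p i.castSucc + 1),
        ((p i.succ : ℤ) - (p i.castSucc : ℤ)) = 1 := by
      intro i hi
      have h2 := (Finset.mem_filter.1 hi).2
      push_neg at h2
      rw [h2]; push_cast; ring
    rw [Finset.sum_congr rfl h1, Finset.sum_const, hupcard, nsmul_eq_mul, mul_one,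
      Nat.cast_sub hkn]
  have h0 : (0 : ℤ) ≤ (p (Fin.last n) : ℤ) := Int.natCast_nonneg _
  have heq : ∑ i ∈ downSet p, ((p i.succ : ℤ) - (p i.castSucc : ℤ))
      + ∑ i ∈ Finset.univ.filter (fun i : Fin n => ¬ p i.succ ≠ p i.castSucc + 1),
        ((p i.succ : ℤ) - (p i.castSucc : ℤ))
      = (p (Fin.last n) : ℤ) - (p 0 : ℤ) := by
    rw [← tel, ← split]
    rfl
  rw [hup, hp0] at heq
  have hfin : ((downSet p).card : ℤ) * N ≤ (n : ℤ) := by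
    push_cast at heq
    linarith
  exact_mod_cast hfin

section Inj

variable {b N n : ℕ} {a : ℕ → ℕ → ℕ} {s : ℕ → Finset ℕ}

/-- Encode one step of a path by the index of the target in the row support. -/
def F (s : ℕ → Finset ℕ) {b : ℕ} (hb : 1 ≤ b) {a : ℕ → ℕ → ℕ} {n : ℕ}
    (p : PathSp a n) (i : Fin n) : Fin b :=
  idxIn (s (p.1 i.castSucc)) hb (p.1 i.succ)

lemma recov_F (hb : 1 ≤ b) (hcard : ∀ v, (s v).card ≤ b)
    (hmem : ∀ v w, a v w ≠ 0 → w ∈ s v) (p : PathSp a n) (i : Fin n) :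
    recov (s (p.1 i.castSucc)) (F s hb p i) = p.1 i.succ :=
  recov_idxIn _ hb (hcard _) (hmem _ _ (by rw [p.2.2 i]; exact one_ne_zero))

lemma F_injective (hb : 1 ≤ b) (hcard : ∀ v, (s v).card ≤ b)
    (hmem : ∀ v w, a v w ≠ 0 → w ∈ s v) :
    Function.Injective (fun p : PathSp a n => F s hb p) := by
  intro p q hpq
  apply Subtype.ext
  funext x
  induction x using Fin.induction with
  | zero => rw [p.2.1, q.2.1]
  | succ i ih =>
    have r1 := recov_F hb hcard hmem p i
    have r2 := recov_F hb hcard hmem q i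
    rw [← r1, ← r2, ih, show F s hb p i = F s hb q i from congrFun hpq i]

lemma finite_pathSp (hb : 1 ≤ b) (hcard : ∀ v, (s v).card ≤ b)
    (hmem : ∀ v w, a v w ≠ 0 → w ∈ s v) : Finite (PathSp a n) :=
  Finite.of_injective _ (F_injective hb hcard hmem)

lemma pathCount_le_pow (hb : 1 ≤ b) (hcard : ∀ v, (s v).card ≤ b)
    (hmem : ∀ v w, a v w ≠ 0 → w ∈ s v) : pathCount a n ≤ b ^ n := by
  calc pathCount a n ≤ Nat.card (Fin n → Fin b) :=
        Nat.card_le_card_of_injective _ (F_injective hb hcard hmem)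
  _ = b ^ n := by
      rw [Nat.card_eq_fintype_card, Fintype.card_fun, Fintype.card_fin, Fintype.card_fin]

lemma one_le_pathCount (hb : 1 ≤ b) (hcard : ∀ v, (s v).card ≤ b)
    (hmem : ∀ v w, a v w ≠ 0 → w ∈ s v) (hsuper : ∀ i, a i (i + 1) = 1) :
    1 ≤ pathCount a n := by
  have hfin : Finite (PathSp a n) := finite_pathSp hb hcard hmem
  have hne : Nonempty (PathSp a n) :=
    ⟨⟨fun i => (i : ℕ), by simp, fun i => by
      simp only [Fin.coe_castSucc, Fin.val_succ]; exact hsuper i⟩⟩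
  exact Nat.card_pos

lemma pathCount_le_main (hb : 1 ≤ b) (hN : 1 ≤ N)
    (hzero : ∀ i j : ℕ, j ≠ i + 1 → (i : ℤ) - N < (j : ℤ) → a i j = 0)
    (hcard : ∀ v, (s v).card ≤ b) (hmem : ∀ v w, a v w ≠ 0 → w ∈ s v) (n : ℕ) :
    pathCount a n ≤ Nat.card {S : Finset (Fin n) // S.card ≤ n / N} * b ^ (n / N) := by
  have hSm : ∀ p : PathSp a n, (downSet p.1).card ≤ n / N := fun p =>
    (Nat.le_div_iff_mul_le (by omega)).2 (downSet_card_mul_le a hN hzero p)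
  set m := n / N with hm
  let Φ : PathSp a n → {S : Finset (Fin n) // S.card ≤ m} × (Fin m → Fin b) := fun p =>
    (⟨downSet p.1, hSm p⟩,
      fun j => if h : (j : ℕ) < (downSet p.1).card
        then F s hb p
          (((downSet p.1).orderIsoOfFin rfl ⟨(j : ℕ), h⟩ : {x // x ∈ downSet p.1}) : Fin n)
        else ⟨0, hb⟩)
  have hval : ∀ (p : PathSp a n) (i : Fin n) (hi : i ∈ downSet p.1) (j : Fin m),
      (j : ℕ) = ((((downSet p.1).orderIsoOfFin rfl).symm ⟨i, hi⟩ : Fin (downSet p.1).card) : ℕ) →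
      (Φ p).2 j = F s hb p i := by
    intro p i hi j hj
    have hjlt : (j : ℕ) < (downSet p.1).card := by
      rw [hj]; exact ((((downSet p.1).orderIsoOfFin rfl).symm ⟨i, hi⟩)).isLt
    have h2 : ((((downSet p.1).orderIsoOfFin rfl).symm ⟨i, hi⟩) : Fin (downSet p.1).card)
        = ⟨(j : ℕ), hjlt⟩ := by
      apply Fin.ext
      exact hj.symm
    have hiso : ((downSet p.1).orderIsoOfFin rfl ⟨(j : ℕ), hjlt⟩ : {x // x ∈ downSet p.1})
        = ⟨i, hi⟩ := by
      rw [← h2, OrderIso.apply_symm_apply]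
    show dite _ _ _ = _
    rw [dif_pos hjlt, hiso]
  have hinj : Function.Injective Φ := by
    intro p q hpq
    have hS : downSet p.1 = downSet q.1 := congrArg (fun t => t.1.1) hpq
    have hg : (Φ p).2 = (Φ q).2 := congrArg Prod.snd hpq
    apply Subtype.ext
    funext x
    induction x using Fin.induction with
    | zero => rw [p.2.1, q.2.1]
    | succ i ih =>
      by_cases hi : i ∈ downSet p.1
      · have hiq : i ∈ downSet q.1 := hS ▸ hi
        set j0 : Fin (downSet p.1).card := (((downSet p.1).orderIsoOfFin rfl).symm ⟨i, hi⟩)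
          with hj0
        have e1 : (Φ p).2 ⟨(j0 : ℕ), lt_of_lt_of_le j0.isLt (hSm p)⟩ = F s hb p i :=
          hval p i hi _ rfl
        have hvq : ((j0 : ℕ))
            = (((((downSet q.1).orderIsoOfFin rfl).symm ⟨i, hiq⟩ : Fin (downSet q.1).card)) : ℕ) := by
          rw [hj0, Finset.orderIsoOfFin_symm_apply, Finset.orderIsoOfFin_symm_apply]
          simp only [hS]
        have e2 : (Φ q).2 ⟨(j0 : ℕ), lt_of_lt_of_le j0.isLt (hSm p)⟩ = F s hb q i :=
          hval q i hiq _ hvq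
        have r1 := recov_F hb hcard hmem p i
        have r2 := recov_F hb hcard hmem q i
        rw [← r1, ← r2, ih, ← e1, ← e2, hg]
      · have hiq : i ∉ downSet q.1 := by rw [← hS]; exact hi
        have h1 : p.1 i.succ = p.1 i.castSucc + 1 := not_ne_iff.1 (fun h => hi (mem_downSet.2 h))
        have h2 : q.1 i.succ = q.1 i.castSucc + 1 := not_ne_iff.1 (fun h => hiq (mem_downSet.2 h))
        rw [h1, h2, ih]
  calc pathCount a n ≤ Nat.card ({S : Finset (Fin n) // S.card ≤ m} × (Fin m → Fin b)) :=
        Nat.card_le_card_of_injective Φ hinj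
  _ = Nat.card {S : Finset (Fin n) // S.card ≤ m} * b ^ m := by
      rw [Nat.card_prod, Nat.card_eq_fintype_card (α := Fin m → Fin b), Fintype.card_fun,
        Fintype.card_fin, Fintype.card_fin]

end Inj

lemma choose_le_choose_of_le {n k m : ℕ} (h2 : 2 * m ≤ n) (hk : k ≤ m) :
    n.choose k ≤ n.choose m := by
  have H : ∀ d k, k + d = m → n.choose k ≤ n.choose m := by
    intro d
    induction d with
    | zero => intro k h; have : k = m := by omega
              subst this; exact le_rfl
    | succ d ih =>
      intro k h
      have hk2 : k < n / 2 := by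
        have h3 : (k + 1) * 2 ≤ n := by omega
        have := (Nat.le_div_iff_mul_le (by norm_num)).2 h3
        omega
      exact (Nat.choose_le_succ_of_lt_half_left hk2).trans (ih (k + 1) (by omega))
  exact H (m - k) k (by omega)

lemma card_small_subsets (n m : ℕ) (h2 : 2 * m ≤ n) :
    Nat.card {S : Finset (Fin n) // S.card ≤ m} ≤ (m + 1) * n.choose m := by
  classical
  rw [Nat.card_eq_fintype_card, Fintype.card_subtype]
  have hsub : (Finset.univ.filter fun S : Finset (Fin n) => S.card ≤ m) ⊆
      (Finset.range (m + 1)).biUnion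
        (fun k => Finset.powersetCard k (Finset.univ : Finset (Fin n))) := by
    intro S hS
    simp only [Finset.mem_filter, Finset.mem_univ, true_and] at hS
    refine Finset.mem_biUnion.2 ⟨S.card, Finset.mem_range.2 (by omega), ?_⟩
    exact Finset.mem_powersetCard.2 ⟨Finset.subset_univ S, rfl⟩
  calc (Finset.univ.filter fun S : Finset (Fin n) => S.card ≤ m).card
      ≤ ((Finset.range (m + 1)).biUnion
        (fun k => Finset.powersetCard k (Finset.univ : Finset (Fin n)))).card :=
        Finset.card_le_card hsub
    _ ≤ ∑ k ∈ Finset.range (m + 1),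
        (Finset.powersetCard k (Finset.univ : Finset (Fin n))).card :=
        Finset.card_biUnion_le
    _ ≤ ∑ _k ∈ Finset.range (m + 1), n.choose m := by
        refine Finset.sum_le_sum fun k hk => ?_
        rw [Finset.card_powersetCard, Finset.card_univ, Fintype.card_fin]
        exact choose_le_choose_of_le h2 (by have := Finset.mem_range.1 hk; omega)
    _ = (m + 1) * n.choose m := by
        rw [Finset.sum_const, Finset.card_range, smul_eq_mul]

end PathCountAux

namespace PathCountAux

lemma log_le_bound {n m b c : ℕ} (hb : 1 ≤ b) (hm : 1 ≤ m) (hmn : m ≤ n)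
    (hc : c ≤ (m + 1) * n.choose m * b ^ m) (hc1 : 1 ≤ c) :
    Real.log c ≤ Real.log ((n : ℝ) + 1)
      + (m : ℝ) * (Real.log ((n : ℝ) / (m : ℝ)) + 1 + Real.log b) := by
  have hn1 : 1 ≤ n := le_trans hm hmn
  have hch : 0 < n.choose m := Nat.choose_pos hmn
  have hfac : (0 : ℝ) < (Nat.factorial m : ℝ) := by exact_mod_cast m.factorial_pos
  have hmR : (0 : ℝ) < (m : ℝ) := by exact_mod_cast hm
  have hnR : (0 : ℝ) < (n : ℝ) := by exact_mod_cast hn1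
  have hbR : (0 : ℝ) < (b : ℝ) := by exact_mod_cast hb
  have h2 : ((m : ℝ)) ^ m / (Nat.factorial m : ℝ) ≤ Real.exp m := by
    refine le_trans ?_ (Real.sum_le_exp_of_nonneg (by positivity) (m + 1))
    refine Finset.single_le_sum (f := fun i => (m : ℝ) ^ i / (Nat.factorial i : ℝ))
      (fun i _ => by positivity) (Finset.self_mem_range_succ m)
  have hlogfac : (m : ℝ) * Real.log m - m ≤ Real.log (Nat.factorial m) := by
    have h3 := Real.log_le_log (by positivity) h2
    rw [Real.log_div (by positivity) (ne_of_gt hfac), Real.log_pow, Real.log_exp] at h3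
    linarith
  have hchle : Real.log (n.choose m) ≤ (m : ℝ) * Real.log n - Real.log (Nat.factorial m) := by
    have h1 : ((n.choose m : ℕ) : ℝ) ≤ (n : ℝ) ^ m / (Nat.factorial m : ℝ) :=
      Nat.choose_le_pow_div m n
    have h3 := Real.log_le_log (by exact_mod_cast hch) h1
    rw [Real.log_div (by positivity) (ne_of_gt hfac), Real.log_pow] at h3
    linarith
  have hsplit : Real.log c ≤ Real.log ((m : ℝ) + 1) + Real.log (n.choose m)
      + (m : ℝ) * Real.log b := by
    have hcpos : (0 : ℝ) < (c : ℝ) := by exact_mod_cast hc1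
    have h3 := Real.log_le_log hcpos
      (show (c : ℝ) ≤ (((m + 1) * n.choose m * b ^ m : ℕ) : ℝ) by exact_mod_cast hc)
    push_cast at h3
    rw [Real.log_mul (by positivity) (by positivity), Real.log_mul (by positivity)
      (by positivity), Real.log_pow] at h3
    linarith
  have hm1 : Real.log ((m : ℝ) + 1) ≤ Real.log ((n : ℝ) + 1) := by
    have : ((m : ℝ) + 1) ≤ ((n : ℝ) + 1) := by
      have : (m : ℝ) ≤ (n : ℝ) := by exact_mod_cast hmn
      linarith
    exact Real.log_le_log (by positivity) this
  have hlogdiv : (m : ℝ) * Real.log ((n : ℝ) / (m : ℝ))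
      = (m : ℝ) * Real.log n - (m : ℝ) * Real.log m := by
    rw [Real.log_div (ne_of_gt hnR) (ne_of_gt hmR)]; ring
  linarith

lemma tendsto_G (N b : ℕ) (hN : 2 ≤ N) (hb : 1 ≤ b) :
    Filter.Tendsto (fun n : ℕ => Real.log ((n : ℝ) + 1) / (n : ℝ)
      + ((n / N : ℕ) : ℝ) / (n : ℝ)
        * (Real.log ((n : ℝ) / ((n / N : ℕ) : ℝ)) + 1 + Real.log b))
      Filter.atTop (nhds (0 + 1 / (N : ℝ) * (Real.log N + 1 + Real.log b))) := by
  have hNR : (0 : ℝ) < (N : ℝ) := by positivity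
  -- T1 : log(n+1)/n → 0
  have hT1a : Filter.Tendsto (fun n : ℕ => Real.log ((n : ℝ) + 1) / ((n : ℝ) + 1))
      Filter.atTop (nhds 0) := by
    have hcomp := Real.isLittleO_log_id_atTop.comp_tendsto
      (Filter.tendsto_atTop_add_const_right Filter.atTop (1 : ℝ) tendsto_natCast_atTop_atTop)
    exact hcomp.tendsto_div_nhds_zero
  have hfrac : Filter.Tendsto (fun n : ℕ => ((n : ℝ) + 1) / (n : ℝ)) Filter.atTop (nhds 1) := by
    have h3 : Filter.Tendsto (fun n : ℕ => 1 + 1 / (n : ℝ)) Filter.atTop (nhds (1 + 0)) :=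
      tendsto_const_nhds.add tendsto_one_div_atTop_nhds_zero_nat
    rw [add_zero] at h3
    refine h3.congr' ?_
    filter_upwards [Filter.eventually_ge_atTop 1] with n hn
    have hn0 : (n : ℝ) ≠ 0 := by
      have : (1 : ℝ) ≤ (n : ℝ) := by exact_mod_cast hn
      linarith
    field_simp
  have hT1 : Filter.Tendsto (fun n : ℕ => Real.log ((n : ℝ) + 1) / (n : ℝ))
      Filter.atTop (nhds 0) := by
    have h4 := hT1a.mul hfrac
    rw [zero_mul] at h4
    refine h4.congr' ?_
    filter_upwards [Filter.eventually_ge_atTop 1] with n hn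
    have hn0 : (n : ℝ) ≠ 0 := by
      have : (1 : ℝ) ≤ (n : ℝ) := by exact_mod_cast hn
      linarith
    field_simp
  -- T2 : (n/N)/n → 1/N
  have hT2 : Filter.Tendsto (fun n : ℕ => ((n / N : ℕ) : ℝ) / (n : ℝ))
      Filter.atTop (nhds (1 / (N : ℝ))) := by
    have hlow : Filter.Tendsto (fun n : ℕ => 1 / (N : ℝ) - 1 / (n : ℝ))
        Filter.atTop (nhds (1 / (N : ℝ) - 0)) :=
      tendsto_const_nhds.sub tendsto_one_div_atTop_nhds_zero_nat
    rw [sub_zero] at hlow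
    refine tendsto_of_tendsto_of_tendsto_of_le_of_le' hlow tendsto_const_nhds ?_ ?_
    · filter_upwards [Filter.eventually_ge_atTop 1] with n hn
      have hnR : (0 : ℝ) < (n : ℝ) := by exact_mod_cast hn
      have h1 : n < N * (n / N) + N := by
        have h2 := Nat.div_add_mod n N
        have h3 : n % N < N := Nat.mod_lt n (by omega)
        omega
      have h1R : (n : ℝ) < (N : ℝ) * ((n / N : ℕ) : ℝ) + N := by exact_mod_cast h1
      have hm : (n : ℝ) / (N : ℝ) - 1 ≤ ((n / N : ℕ) : ℝ) := by
        rw [sub_le_iff_le_add, div_le_iff₀ hNR]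
        nlinarith
      calc 1 / (N : ℝ) - 1 / (n : ℝ) = ((n : ℝ) / (N : ℝ) - 1) / (n : ℝ) := by
            field_simp
      _ ≤ ((n / N : ℕ) : ℝ) / (n : ℝ) := by gcongr
    · filter_upwards [Filter.eventually_ge_atTop 1] with n hn
      have hnR : (0 : ℝ) < (n : ℝ) := by exact_mod_cast hn
      calc ((n / N : ℕ) : ℝ) / (n : ℝ) ≤ ((n : ℝ) / (N : ℝ)) / (n : ℝ) := by
            gcongr
            exact Nat.cast_div_le
      _ = 1 / (N : ℝ) := by field_simp
  -- T3 : n/(n/N) → N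
  have hT3 : Filter.Tendsto (fun n : ℕ => (n : ℝ) / ((n / N : ℕ) : ℝ))
      Filter.atTop (nhds (N : ℝ)) := by
    have h5 := hT2.inv₀ (by positivity)
    have h6 : (1 / (N : ℝ))⁻¹ = (N : ℝ) := by field_simp
    rw [h6] at h5
    refine h5.congr ?_
    intro n
    rw [inv_div]
  have hT3log : Filter.Tendsto (fun n : ℕ => Real.log ((n : ℝ) / ((n / N : ℕ) : ℝ)))
      Filter.atTop (nhds (Real.log N)) :=
    ((Real.continuousAt_log (ne_of_gt hNR)).tendsto.comp hT3)
  have hX : Filter.Tendsto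
      (fun n : ℕ => Real.log ((n : ℝ) / ((n / N : ℕ) : ℝ)) + 1 + Real.log b)
      Filter.atTop (nhds (Real.log N + 1 + Real.log b)) :=
    (hT3log.add_const 1).add_const (Real.log b)
  exact hT1.add (hT2.mul hX)

end PathCountAux

open PathCountAux in
/-- Combinatorial core of the entropy estimate: for a 0–1 matrix with the
superdiagonal full, zero entries strictly above the `N`-th subdiagonal (except the
superdiagonal) and at most `b` nonzero entries in each row, the exponential growth
rate of the number of paths from the first vertex is at most
`(2/N) log b + (2/N) log N`. -/
theorem path_count_growth_estimate (b N : ℕ) (hb : 1 ≤ b) (hN : 1 ≤ N)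
    (a : ℕ → ℕ → ℕ)
    (h01 : ∀ i j, a i j ≤ 1)
    (hsuper : ∀ i, a i (i + 1) = 1)
    (hzero : ∀ i j : ℕ, j ≠ i + 1 → (i : ℤ) - N < (j : ℤ) → a i j = 0)
    (hrow : ∀ i, ∃ s : Finset ℕ, s.card ≤ b ∧ ∀ j, a i j ≠ 0 → j ∈ s) :
    limsup (fun n : ℕ => Real.log (pathCount a n) / n) atTop ≤
      (2 / N) * Real.log b + (2 / N) * Real.log N := by
  classical
  choose s hcard hmem using hrow
  have hpc1 : ∀ n : ℕ, 1 ≤ pathCount a n := fun n =>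
    one_le_pathCount hb hcard hmem hsuper
  have hf0 : ∀ n : ℕ, 0 ≤ Real.log (pathCount a n) / n := fun n =>
    div_nonneg (Real.log_nonneg (by exact_mod_cast hpc1 n)) (Nat.cast_nonneg n)
  have hcob : Filter.IsCoboundedUnder (· ≤ ·) atTop
      (fun n : ℕ => Real.log (pathCount a n) / n) :=
    Filter.isCoboundedUnder_le_of_le atTop hf0
  have hNR : (0 : ℝ) < (N : ℝ) := by exact_mod_cast hN
  by_cases hbN : b = 1 ∨ N = 1
  · -- easy case: limsup ≤ log b suffices
    have hev : ∀ n : ℕ, Real.log (pathCount a n) / n ≤ Real.log b := by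
      intro n
      rcases Nat.eq_zero_or_pos n with h0 | h0
      · subst h0
        simp only [Nat.cast_zero, div_zero]
        exact Real.log_nonneg (by exact_mod_cast hb)
      · have h1 : pathCount a n ≤ b ^ n := pathCount_le_pow hb hcard hmem
        have hnR : (0 : ℝ) < (n : ℝ) := by exact_mod_cast h0
        have h2 : Real.log (pathCount a n) ≤ n * Real.log b := by
          calc Real.log (pathCount a n) ≤ Real.log ((b : ℝ) ^ n) :=
                Real.log_le_log (by exact_mod_cast hpc1 n) (by exact_mod_cast h1)
          _ = n * Real.log b := by rw [Real.log_pow]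
        rw [div_le_iff₀ hnR]
        linarith
    have hlim : limsup (fun n : ℕ => Real.log (pathCount a n) / n) atTop ≤ Real.log b :=
      Filter.limsup_le_of_le hcob (Filter.Eventually.of_forall hev)
    refine le_trans hlim ?_
    rcases hbN with hb1 | hN1
    · subst hb1
      simp only [Nat.cast_one, Real.log_one, mul_zero, zero_add]
      exact mul_nonneg (by positivity) (Real.log_nonneg (by exact_mod_cast hN))
    · subst hN1
      simp only [Nat.cast_one, Real.log_one, mul_zero, add_zero, div_one]
      have := Real.log_nonneg (show (1:ℝ) ≤ (b:ℝ) by exact_mod_cast hb)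
      linarith
  · push_neg at hbN
    obtain ⟨hb1, hN1⟩ := hbN
    have hb2 : 2 ≤ b := by omega
    have hN2 : 2 ≤ N := by omega
    have hev : ∀ᶠ n in atTop, Real.log (pathCount a n) / n ≤
        Real.log ((n : ℝ) + 1) / (n : ℝ) + ((n / N : ℕ) : ℝ) / (n : ℝ)
          * (Real.log ((n : ℝ) / ((n / N : ℕ) : ℝ)) + 1 + Real.log b) := by
      filter_upwards [Filter.eventually_ge_atTop N] with n hn
      have hm1 : 1 ≤ n / N := (Nat.one_le_div_iff (by omega)).2 hn
      have hmn : n / N ≤ n := Nat.div_le_self n N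
      have h2m : 2 * (n / N) ≤ n := by
        have h4 : n / N ≤ n / 2 := Nat.div_le_div_left hN2 (by norm_num)
        have h5 := Nat.div_mul_le_self n 2
        omega
      have hcmb : pathCount a n ≤ (n / N + 1) * n.choose (n / N) * b ^ (n / N) := by
        calc pathCount a n
            ≤ Nat.card {S : Finset (Fin n) // S.card ≤ n / N} * b ^ (n / N) :=
              pathCount_le_main hb hN hzero hcard hmem n
        _ ≤ ((n / N + 1) * n.choose (n / N)) * b ^ (n / N) :=
              Nat.mul_le_mul_right _ (card_small_subsets n (n / N) h2m)
      have hlog := log_le_bound hb hm1 hmn hcmb (hpc1 n)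
      have hnR : (0 : ℝ) < (n : ℝ) := by
        have : 0 < n := by omega
        exact_mod_cast this
      calc Real.log (pathCount a n) / n
          ≤ (Real.log ((n : ℝ) + 1) + ((n / N : ℕ) : ℝ)
            * (Real.log ((n : ℝ) / ((n / N : ℕ) : ℝ)) + 1 + Real.log b)) / n := by
            exact div_le_div_of_nonneg_right hlog hnR.le |>.trans_eq rfl
      _ = _ := by ring
    have hG := tendsto_G N b hN2 hb
    have hle := Filter.limsup_le_limsup hev hcob hG.isBoundedUnder_le
    rw [hG.limsup_eq] at hle
    refine le_trans hle ?_
    have hkey : Real.log N + 1 + Real.log b ≤ 2 * Real.log b + 2 * Real.log N := by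
      have h2b : Real.log 2 ≤ Real.log b :=
        Real.log_le_log (by norm_num) (by exact_mod_cast hb2)
      have h2N : Real.log 2 ≤ Real.log N :=
        Real.log_le_log (by norm_num) (by exact_mod_cast hN2)
      have he : Real.exp 1 ≤ 4 := le_trans (le_of_lt Real.exp_one_lt_d9) (by norm_num)
      have h4 : (1 : ℝ) ≤ Real.log 4 := by
        rw [Real.le_log_iff_exp_le (by norm_num)]; exact he
      have h42 : Real.log 4 = 2 * Real.log 2 := by
        rw [show (4 : ℝ) = 2 ^ 2 by norm_num, Real.log_pow]
        push_cast; ring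
      linarith
    calc 0 + 1 / (N : ℝ) * (Real.log N + 1 + Real.log b)
        ≤ 1 / (N : ℝ) * (2 * Real.log b + 2 * Real.log N) := by
          rw [zero_add]
          exact mul_le_mul_of_nonneg_left hkey (by positivity)
    _ = (2 / N) * Real.log b + (2 / N) * Real.log N := by ring
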